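/- arXiv:1806.11285 — 2 statements merged into one kernel-verified Lean document; each statement's English description precedes it below -/
import Mathlib

section
/- Let h, h_1, ..., h_n be jointly independent random variables, each exponentially distributed with rate 1, let θ ≥ 0 and let a_1, ..., a_n be positive real numbers. Then the probability that h ≥ θ · Σ_{k=1}^n a_k h_k equals Π_{k=1}^n 1/(1 + θ a_k). -/
open MeasureTheory ProbabilityTheory Real Set

lemma expMeasure_eq : expMeasure 1 = volume.withDensity (exponentialPDF 1) := rfl

lemma expMeasure_Iio_zero : expMeasure 1 (Iio 0) = 0 := by
  rw [expMeasure_eq, withDensity_apply _ measurableSet_Iio]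
  exact lintegral_exponentialPDF_of_nonpos le_rfl

lemma expMeasure_Ici {x : ℝ} (hx : 0 ≤ x) :
    expMeasure 1 (Ici x) = ENNReal.ofReal (rexp (-x)) := by
  have hp : IsProbabilityMeasure (expMeasure 1) := isProbabilityMeasure_expMeasure one_pos
  have hIic : expMeasure 1 (Iic x) = ENNReal.ofReal (1 - rexp (-x)) := by
    rw [expMeasure_eq, withDensity_apply _ measurableSet_Iic,
      lintegral_exponentialPDF_eq_antiDeriv one_pos, if_pos hx, one_mul]
  have hsingle : expMeasure 1 {x} = 0 := by
    rw [expMeasure_eq, withDensity_apply _ (measurableSet_singleton x)]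
    rw [Measure.restrict_singleton, Real.volume_singleton]
    simp
  have hIio : expMeasure 1 (Iio x) = ENNReal.ofReal (1 - rexp (-x)) := by
    have : expMeasure 1 (Iic x) = expMeasure 1 (Iio x) + expMeasure 1 {x} := by
      rw [← measure_union (by simp) (measurableSet_singleton x), Set.Iio_union_right]
    rw [← hIic, this, hsingle, add_zero]
  have : Ici x = (Iio x)ᶜ := (compl_Iio).symm
  rw [this, measure_compl measurableSet_Iio (measure_ne_top _ _), hIio, measure_univ]
  rw [← ENNReal.ofReal_one, ← ENNReal.ofReal_sub _ (sub_nonneg.mpr (by simpa using Real.exp_le_one_iff.mpr (neg_nonpos.mpr hx)))]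
  norm_num

lemma ae_nonneg_of_expMeasure {Ω : Type*} [MeasurableSpace Ω] {μ : Measure Ω}
    {f : Ω → ℝ} (hf : Measurable f) (h : μ.map f = expMeasure 1) :
    ∀ᵐ ω ∂μ, 0 ≤ f ω := by
  have : μ {ω | f ω < 0} = 0 := by
    have := Measure.map_apply (μ := μ) hf (measurableSet_Iio (a := (0:ℝ)))
    rw [h, expMeasure_Iio_zero] at this
    simpa [Set.preimage, Set.Iio] using this.symm
  filter_upwards [measure_eq_zero_iff_ae_notMem.mp this] with ω hω
  simpa [not_lt] using hω

lemma laplace_factor {Ω : Type*} [MeasurableSpace Ω] {μ : Measure Ω}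
    {f : Ω → ℝ} (hf : Measurable f) (h : μ.map f = expMeasure 1)
    {c : ℝ} (hc : 0 ≤ c) :
    ∫⁻ ω, ENNReal.ofReal (rexp (-(c * f ω))) ∂μ = ENNReal.ofReal (1 / (1 + c)) := by
  have hmg : Measurable fun x : ℝ => ENNReal.ofReal (rexp (-(c * x))) :=
    ((Real.measurable_exp.comp ((measurable_const_mul c).neg))).ennreal_ofReal
  rw [← lintegral_map hmg hf, h, expMeasure_eq,
    lintegral_withDensity_eq_lintegral_mul _ (show Measurable (exponentialPDF 1) from (measurable_exponentialPDFReal 1).ennreal_ofReal) hmg]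
  have hc1 : (0:ℝ) < 1 + c := by linarith
  have key : ∀ x : ℝ, (exponentialPDF 1 * fun x => ENNReal.ofReal (rexp (-(c * x)))) x
      = ENNReal.ofReal (1 / (1 + c)) * exponentialPDF (1 + c) x := by
    intro x
    simp only [Pi.mul_apply]
    rcases le_or_gt 0 x with hx | hx
    · rw [exponentialPDF_of_nonneg hx, exponentialPDF_of_nonneg hx, one_mul,
        ← ENNReal.ofReal_mul (by positivity), ← ENNReal.ofReal_mul (by positivity)]
      congr 1
      rw [← Real.exp_add]
      field_simp
      ring_nf
    · rw [exponentialPDF_of_neg hx, exponentialPDF_of_neg hx, zero_mul, mul_zero]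
  calc ∫⁻ x, (exponentialPDF 1 * fun x => ENNReal.ofReal (rexp (-(c * x)))) x
      = ∫⁻ x, ENNReal.ofReal (1 / (1 + c)) * exponentialPDF (1 + c) x := by
        exact lintegral_congr key
    _ = ENNReal.ofReal (1 / (1 + c)) * ∫⁻ x, exponentialPDF (1 + c) x :=
        lintegral_const_mul _ ((measurable_gammaPDFReal 1 (1+c)).ennreal_ofReal)
    _ = ENNReal.ofReal (1 / (1 + c)) := by
        rw [lintegral_exponentialPDF_eq_one hc1, mul_one]

lemma laplace_indep_prod {Ω : Type*} [MeasurableSpace Ω] {μ : Measure Ω}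
    [IsProbabilityMeasure μ] {ι : Type*} {G : ι → Ω → ℝ}
    (hGm : ∀ i, Measurable (G i))
    (hGi : iIndepFun G μ) (t : Finset ι) :
    ∫⁻ ω, ENNReal.ofReal (rexp (-(∑ j ∈ t, G j ω))) ∂μ
      = ∏ j ∈ t, ∫⁻ ω, ENNReal.ofReal (rexp (-(G j ω))) ∂μ := by
  classical
  induction t using Finset.induction_on with
  | empty => simp
  | insert _ _ hi =>
    rename_i i s ih
    have hind : IndepFun (G i) (fun ω => ∑ j ∈ s, G j ω) μ := by
      have := (hGi.indepFun_finsetSum_of_notMem hGm hi).symm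
      have hfun : (∑ j ∈ s, G j) = fun ω => ∑ j ∈ s, G j ω := by
        funext ω; simp [Finset.sum_apply]
      rwa [hfun] at this
    have hcomp : IndepFun (fun ω => ENNReal.ofReal (rexp (-(G i ω))))
        (fun ω => ENNReal.ofReal (rexp (-(∑ j ∈ s, G j ω)))) μ :=
      hind.comp (φ := fun x : ℝ => ENNReal.ofReal (rexp (-x)))
        (ψ := fun x : ℝ => ENNReal.ofReal (rexp (-x)))
        (Real.measurable_exp.comp measurable_neg).ennreal_ofReal
        (Real.measurable_exp.comp measurable_neg).ennreal_ofReal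
    have hsplit : ∀ ω, ENNReal.ofReal (rexp (-(∑ j ∈ insert i s, G j ω)))
        = ENNReal.ofReal (rexp (-(G i ω))) * ENNReal.ofReal (rexp (-(∑ j ∈ s, G j ω))) := by
      intro ω
      rw [Finset.sum_insert hi, neg_add, Real.exp_add,
        ENNReal.ofReal_mul (Real.exp_nonneg _)]
    calc ∫⁻ ω, ENNReal.ofReal (rexp (-(∑ j ∈ insert i s, G j ω))) ∂μ
        = ∫⁻ ω, ENNReal.ofReal (rexp (-(G i ω)))
            * ENNReal.ofReal (rexp (-(∑ j ∈ s, G j ω))) ∂μ := lintegral_congr hsplit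
      _ = (∫⁻ ω, ENNReal.ofReal (rexp (-(G i ω))) ∂μ)
            * ∫⁻ ω, ENNReal.ofReal (rexp (-(∑ j ∈ s, G j ω))) ∂μ :=
          lintegral_mul_eq_lintegral_mul_lintegral_of_indepFun
            ((Real.measurable_exp.comp (hGm i).neg).ennreal_ofReal)
            ((Real.measurable_exp.comp (Finset.measurable_sum s fun j _ => hGm j).neg).ennreal_ofReal)
            hcomp
      _ = ∏ j ∈ insert i s, ∫⁻ ω, ENNReal.ofReal (rexp (-(G j ω))) ∂μ := by
          rw [ih, Finset.prod_insert hi]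


/-- Let `h = H 0, h_1 = H 1, ..., h_n = H n` be jointly independent random variables, each
exponentially distributed with rate 1, let `θ ≥ 0` and let `a 1, ..., a n` be positive reals.
Then `P[h ≥ θ ∑_k a_k h_k] = ∏_k 1 / (1 + θ a_k)`. -/
theorem prob_exp_ge_theta_weighted_sum
    {Ω : Type*} [MeasurableSpace Ω] (μ : Measure Ω) [IsProbabilityMeasure μ]
    (n : ℕ) (H : Fin (n + 1) → Ω → ℝ)
    (hmeas : ∀ k, Measurable (H k))
    (hindep : iIndepFun H μ)
    (hexp : ∀ k, μ.map (H k) = expMeasure 1)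
    (θ : ℝ) (hθ : 0 ≤ θ) (a : Fin n → ℝ) (ha : ∀ k, 0 < a k) :
    μ {ω | θ * ∑ k : Fin n, a k * H k.succ ω ≤ H 0 ω}
      = ENNReal.ofReal (∏ k : Fin n, 1 / (1 + θ * a k)) := by
  classical
  haveI : IsProbabilityMeasure (expMeasure 1) := isProbabilityMeasure_expMeasure one_pos
  set c : Fin (n + 1) → ℝ := Fin.cons 1 (fun k => θ * a k) with hc
  set G : Fin (n + 1) → Ω → ℝ := fun k ω => c k * H k ω with hG
  have hGm : ∀ k, Measurable (G k) := fun k => (hmeas k).const_mul (c k)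
  have hGi : iIndepFun G μ :=
    hindep.comp (fun k x => c k * x) (fun k => measurable_const_mul _)
  have hcnn : ∀ j, 0 ≤ c j := by
    intro j
    refine Fin.cases ?_ ?_ j
    · simp [hc]
    · intro k; simp only [hc, Fin.cons_succ]; exact mul_nonneg hθ (ha k).le
  have E : (Finset.univ.erase (0 : Fin (n + 1))) = Finset.image Fin.succ Finset.univ := by
    ext x
    simp only [Finset.mem_erase, Finset.mem_univ, and_true, Finset.mem_image, true_and]
    constructor
    · intro hx
      obtain ⟨y, hy⟩ := Fin.eq_succ_of_ne_zero hx
      exact ⟨y, hy.symm⟩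
    · rintro ⟨y, rfl⟩; exact Fin.succ_ne_zero y
  set S : Ω → ℝ := fun ω => ∑ j ∈ Finset.univ.erase (0 : Fin (n + 1)), G j ω with hS
  have hSums : ∀ ω, S ω = θ * ∑ k : Fin n, a k * H k.succ ω := by
    intro ω
    simp only [hS]
    rw [E, Finset.sum_image (fun x _ y _ h => Fin.succ_injective n h), Finset.mul_sum]
    refine Finset.sum_congr rfl fun k _ => ?_
    simp [hG, hc, Fin.cons_succ, mul_assoc]
  have hSmeas : Measurable S :=
    Finset.measurable_sum _ fun j _ => hGm j
  have hG0 : G 0 = H 0 := by funext ω; simp [hG, hc]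
  have hindSH : IndepFun S (H 0) μ := by
    have h1 := hGi.indepFun_finsetSum_of_notMem hGm
      (Finset.notMem_erase (0 : Fin (n + 1)) Finset.univ)
    have h2 : (∑ j ∈ Finset.univ.erase (0 : Fin (n + 1)), G j) = S := by
      funext ω; simp [hS, Finset.sum_apply]
    rwa [h2, hG0] at h1
  have hset : {ω | θ * ∑ k : Fin n, a k * H k.succ ω ≤ H 0 ω} = {ω | S ω ≤ H 0 ω} := by
    ext ω; simp [hSums ω]
  have hms : MeasurableSet {p : ℝ × ℝ | p.1 ≤ p.2} :=
    measurableSet_le measurable_fst measurable_snd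
  have hmap := (indepFun_iff_map_prod_eq_prod_map_map hSmeas.aemeasurable
    (hmeas 0).aemeasurable).mp hindSH
  have step1 : μ {ω | S ω ≤ H 0 ω} = ∫⁻ x, expMeasure 1 (Ici x) ∂(μ.map S) := by
    have hpre : {ω | S ω ≤ H 0 ω}
        = (fun ω => (S ω, H 0 ω)) ⁻¹' {p : ℝ × ℝ | p.1 ≤ p.2} := rfl
    rw [hpre, ← Measure.map_apply (hSmeas.prodMk (hmeas 0)) hms, hmap, hexp 0,
      Measure.prod_apply hms]
    refine lintegral_congr fun x => rfl
  have hSnn : ∀ᵐ ω ∂μ, 0 ≤ S ω := by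
    have hk : ∀ᵐ ω ∂μ, ∀ k, 0 ≤ H k ω :=
      ae_all_iff.mpr fun k => ae_nonneg_of_expMeasure (hmeas k) (hexp k)
    filter_upwards [hk] with ω hω
    exact Finset.sum_nonneg fun j _ => mul_nonneg (hcnn j) (hω j)
  have step2 : ∫⁻ x, expMeasure 1 (Ici x) ∂(μ.map S)
      = ∫⁻ x, ENNReal.ofReal (rexp (-x)) ∂(μ.map S) := by
    refine lintegral_congr_ae ?_
    filter_upwards [(ae_map_iff hSmeas.aemeasurable measurableSet_Ici).mpr hSnn] with x hx
    exact expMeasure_Ici hx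
  have step3 : ∫⁻ x, ENNReal.ofReal (rexp (-x)) ∂(μ.map S)
      = ∫⁻ ω, ENNReal.ofReal (rexp (-(S ω))) ∂μ :=
    lintegral_map (Real.measurable_exp.comp measurable_neg).ennreal_ofReal hSmeas
  have step4 : ∫⁻ ω, ENNReal.ofReal (rexp (-(S ω))) ∂μ
      = ∏ j ∈ Finset.univ.erase (0 : Fin (n + 1)),
          ∫⁻ ω, ENNReal.ofReal (rexp (-(G j ω))) ∂μ :=
    laplace_indep_prod hGm hGi _
  have step5 : ∏ j ∈ Finset.univ.erase (0 : Fin (n + 1)),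
        ∫⁻ ω, ENNReal.ofReal (rexp (-(G j ω))) ∂μ
      = ∏ k : Fin n, ENNReal.ofReal (1 / (1 + θ * a k)) := by
    rw [E, Finset.prod_image (fun x _ y _ h => Fin.succ_injective n h)]
    refine Finset.prod_congr rfl fun k _ => ?_
    have : ∀ ω, G k.succ ω = (θ * a k) * H k.succ ω := by
      intro ω; simp [hG, hc, Fin.cons_succ]
    simp only [this]
    exact laplace_factor (hmeas k.succ) (hexp k.succ) (mul_nonneg hθ (ha k).le)
  rw [hset, step1, step2, step3, step4, step5,
    ENNReal.ofReal_prod_of_nonneg fun k _ =>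
      div_nonneg zero_le_one (by nlinarith [mul_nonneg hθ (ha k).le])]
end

section
/- Let Q be an n × n real matrix with nonnegative off-diagonal entries and zero row sums, let A be a subset of the index set, and let Q̂ be the matrix obtained from Q by replacing every row whose index is not in A by the zero row. Then for every t ≥ 0, every index i, and every j ∈ A, the matrix exponentials satisfy (exp(t Q̂))_{ij} ≤ (exp(t Q))_{ij}. Consequently, for every nonnegative row vector v, Σ_{j∈A} (v ⬝ exp(t Q̂))_j ≤ Σ_{j∈A} (v ⬝ exp(t Q))_j. -/
open NormedSpace Nat

section Aux

variable {n : ℕ}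

private lemma entry_hasSum_exp (M : Matrix (Fin n) (Fin n) ℝ) (i j : Fin n) :
    HasSum (fun k : ℕ => (k ! : ℝ)⁻¹ * (M ^ k) i j) (exp M i j) := by
  letI : SeminormedRing (Matrix (Fin n) (Fin n) ℝ) := Matrix.linftyOpSemiNormedRing
  letI : NormedRing (Matrix (Fin n) (Fin n) ℝ) := Matrix.linftyOpNormedRing
  letI : NormedAlgebra ℝ (Matrix (Fin n) (Fin n) ℝ) := Matrix.linftyOpNormedAlgebra
  have h : HasSum (fun k : ℕ => (k ! : ℝ)⁻¹ • M ^ k) (exp M) :=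
    exp_series_hasSum_exp' M
  have hc : Continuous fun f : Matrix (Fin n) (Fin n) ℝ => f i j :=
    (continuous_apply j).comp (continuous_apply i)
  exact h.map (⟨⟨⟨fun f => f i j, fun a b => rfl⟩, fun c a => rfl⟩, hc⟩ :
    Matrix (Fin n) (Fin n) ℝ →L[ℝ] ℝ) hc

private lemma exp_smul_one_eq (r : ℝ) :
    exp (r • (1 : Matrix (Fin n) (Fin n) ℝ)) = Real.exp r • 1 := by
  ext i j
  have h := entry_hasSum_exp (r • (1 : Matrix (Fin n) (Fin n) ℝ)) i j
  simp only [smul_pow, one_pow, Matrix.smul_apply, smul_eq_mul] at h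
  have hre : HasSum (fun k : ℕ => (k ! : ℝ)⁻¹ * r ^ k) (Real.exp r) := by
    simpa [smul_eq_mul, ← Real.exp_eq_exp_ℝ] using exp_series_hasSum_exp' (𝕂 := ℝ) r
  rw [Matrix.smul_apply, smul_eq_mul]
  by_cases hij : i = j
  · subst hij
    simp only [Matrix.one_apply_eq, mul_one] at h ⊢
    exact h.unique hre
  · simp only [Matrix.one_apply_ne hij, mul_zero] at h ⊢
    exact h.unique hasSum_zero

private lemma pow_entry_nonneg {M : Matrix (Fin n) (Fin n) ℝ} (hM : ∀ i j, 0 ≤ M i j) :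
    ∀ (k : ℕ) (i j : Fin n), 0 ≤ (M ^ k) i j := by
  intro k
  induction k with
  | zero =>
    intro i j
    rw [pow_zero, Matrix.one_apply]
    split <;> norm_num
  | succ k ih =>
    intro i j
    rw [pow_succ, Matrix.mul_apply]
    exact Finset.sum_nonneg fun l _ => mul_nonneg (ih i l) (hM l j)

private lemma pow_entry_le {A : Finset (Fin n)} {M N : Matrix (Fin n) (Fin n) ℝ}
    (hM : ∀ i j, 0 ≤ M i j)
    (h1 : ∀ i, i ∈ A → ∀ j, N i j = M i j)
    (h2 : ∀ i, i ∉ A → ∀ j, j ≠ i → N i j = 0) :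
    ∀ (k : ℕ) (i j : Fin n), j ∈ A → (N ^ k) i j ≤ (M ^ k) i j := by
  intro k
  induction k with
  | zero => intro i j _; rw [pow_zero, pow_zero]
  | succ k ih =>
    intro i j hj
    rw [pow_succ, pow_succ, Matrix.mul_apply, Matrix.mul_apply]
    apply Finset.sum_le_sum
    intro l _
    by_cases hl : l ∈ A
    · rw [h1 l hl j]
      exact mul_le_mul_of_nonneg_right (ih i l hl) (hM l j)
    · have hjl : j ≠ l := fun h => hl (h ▸ hj)
      rw [h2 l hl j hjl, mul_zero]
      exact mul_nonneg (pow_entry_nonneg hM k i l) (hM l j)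

end Aux

/-- Reliability is bounded by availability: if `Q` is a generator matrix (nonnegative
off-diagonal entries, zero row sums), `A` a set of (available) states and `Qhat` the matrix
obtained from `Q` by zeroing out every row with index outside `A`, then each entry
`(exp (t Qhat)) i j` with `j ∈ A` is at most `(exp (t Q)) i j` for `t ≥ 0`; consequently for
every nonnegative initial row vector `v`,
`∑_{j ∈ A} (v ⬝ exp (t Qhat)) j ≤ ∑_{j ∈ A} (v ⬝ exp (t Q)) j`. -/
theorem reliability_le_availability {n : ℕ} (Q : Matrix (Fin n) (Fin n) ℝ)
    (hoff : ∀ i j, i ≠ j → 0 ≤ Q i j) (hrow : ∀ i, ∑ j, Q i j = 0)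
    (A : Finset (Fin n))
    (Qhat : Matrix (Fin n) (Fin n) ℝ)
    (hQhat : ∀ i j, Qhat i j = if i ∈ A then Q i j else 0)
    (t : ℝ) (ht : 0 ≤ t) :
    (∀ i j, j ∈ A →
      (NormedSpace.exp (t • Qhat)) i j ≤ (NormedSpace.exp (t • Q)) i j) ∧
    (∀ v : Fin n → ℝ, (∀ i, 0 ≤ v i) →
      ∑ j ∈ A, Matrix.vecMul v (NormedSpace.exp (t • Qhat)) j ≤
        ∑ j ∈ A, Matrix.vecMul v (NormedSpace.exp (t • Q)) j) := by
  classical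
  set c : ℝ := ∑ i, |Q i i| with hc
  have hcnn : 0 ≤ c := Finset.sum_nonneg fun i _ => abs_nonneg _
  have hdiag : ∀ i : Fin n, 0 ≤ Q i i + c := by
    intro i
    have h1 : |Q i i| ≤ c :=
      Finset.single_le_sum (f := fun i => |Q i i|) (fun i _ => abs_nonneg _)
        (Finset.mem_univ i)
    have := neg_abs_le (Q i i)
    linarith
  set M : Matrix (Fin n) (Fin n) ℝ := t • (Q + c • 1) with hMdef
  set N : Matrix (Fin n) (Fin n) ℝ := t • (Qhat + c • 1) with hNdef
  set r : ℝ := -(t * c) with hr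
  have hM : ∀ i j, 0 ≤ M i j := by
    intro i j
    rw [hMdef, Matrix.smul_apply, Matrix.add_apply, Matrix.smul_apply, smul_eq_mul,
      smul_eq_mul]
    by_cases hij : i = j
    · subst hij; rw [Matrix.one_apply_eq, mul_one]
      exact mul_nonneg ht (hdiag i)
    · rw [Matrix.one_apply_ne hij, mul_zero, add_zero]
      exact mul_nonneg ht (hoff i j hij)
  have hQhat_nn : ∀ i j, 0 ≤ N i j := by
    intro i j
    rw [hNdef, Matrix.smul_apply, Matrix.add_apply, Matrix.smul_apply, smul_eq_mul,
      smul_eq_mul, hQhat]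
    by_cases hiA : i ∈ A
    · simp only [if_pos hiA]
      by_cases hij : i = j
      · subst hij; rw [Matrix.one_apply_eq, mul_one]
        exact mul_nonneg ht (hdiag i)
      · rw [Matrix.one_apply_ne hij, mul_zero, add_zero]
        exact mul_nonneg ht (hoff i j hij)
    · simp only [if_neg hiA, zero_add]
      by_cases hij : i = j
      · subst hij; rw [Matrix.one_apply_eq, mul_one]
        exact mul_nonneg ht hcnn
      · rw [Matrix.one_apply_ne hij, mul_zero, mul_zero]
  have h1 : ∀ i, i ∈ A → ∀ j, N i j = M i j := by
    intro i hi j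
    rw [hNdef, hMdef, Matrix.smul_apply, Matrix.smul_apply, Matrix.add_apply,
      Matrix.add_apply, hQhat, if_pos hi]
  have h2 : ∀ i, i ∉ A → ∀ j, j ≠ i → N i j = 0 := by
    intro i hi j hj
    rw [hNdef, Matrix.smul_apply, Matrix.add_apply, Matrix.smul_apply, hQhat,
      if_neg hi, Matrix.one_apply_ne (Ne.symm hj)]
    simp
  have hdecQ : t • Q = M + r • (1 : Matrix (Fin n) (Fin n) ℝ) := by
    rw [hMdef, hr, smul_add, smul_smul, add_assoc, ← add_smul]
    simp
  have hdecQhat : t • Qhat = N + r • (1 : Matrix (Fin n) (Fin n) ℝ) := by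
    rw [hNdef, hr, smul_add, smul_smul, add_assoc, ← add_smul]
    simp
  have hcomm : ∀ P : Matrix (Fin n) (Fin n) ℝ,
      Commute P (r • (1 : Matrix (Fin n) (Fin n) ℝ)) :=
    fun P => (Commute.one_right P).smul_right r
  have hexpQ : exp (t • Q) = Real.exp r • exp M := by
    rw [hdecQ, Matrix.exp_add_of_commute _ _ (hcomm M), exp_smul_one_eq,
      mul_smul_comm, mul_one]
  have hexpQhat : exp (t • Qhat) = Real.exp r • exp N := by
    rw [hdecQhat, Matrix.exp_add_of_commute _ _ (hcomm N), exp_smul_one_eq,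
      mul_smul_comm, mul_one]
  have key : ∀ i j, j ∈ A → exp (t • Qhat) i j ≤ exp (t • Q) i j := by
    intro i j hj
    rw [hexpQ, hexpQhat, Matrix.smul_apply, Matrix.smul_apply, smul_eq_mul, smul_eq_mul]
    apply mul_le_mul_of_nonneg_left _ (Real.exp_pos r).le
    exact hasSum_le
      (fun k => mul_le_mul_of_nonneg_left (pow_entry_le hM h1 h2 k i j hj)
        (by positivity))
      (entry_hasSum_exp N i j) (entry_hasSum_exp M i j)
  refine ⟨key, ?_⟩
  intro v hv
  apply Finset.sum_le_sum
  intro j hj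
  rw [Matrix.vecMul, Matrix.vecMul, dotProduct, dotProduct]
  apply Finset.sum_le_sum
  intro i _
  exact mul_le_mul_of_nonneg_left (key i j hj) (hv i)
end
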